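/- If ν : (0, ∞) → ℂ is bounded, measurable, and ν(t) → L as t → ∞, then the Laplace transform satisfies lim_{s → 0⁺} s · ∫₀^∞ ν(t) e^{−st} dt = L. -/

import Mathlib

open MeasureTheory Filter

/-- Abelian theorem for the Laplace transform: if ν : (0,∞) → ℂ is bounded, measurable and
ν(t) → L as t → ∞, then s·∫₀^∞ ν(t)e^{−st} dt → L as s → 0⁺. -/
theorem laplace_abelian (ν : ℝ → ℂ) (L : ℂ)
    (hmeas : Measurable ν)
    (hbdd : ∃ C : ℝ, ∀ t > (0 : ℝ), ‖ν t‖ ≤ C)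
    (hlim : Tendsto ν atTop (nhds L)) :
    Tendsto (fun s : ℝ => (s : ℂ) * ∫ t in Set.Ioi (0 : ℝ), ν t * Complex.exp (-(s : ℂ) * t))
      (nhdsWithin 0 (Set.Ioi 0)) (nhds L) := by
  obtain ⟨C, hC⟩ := hbdd
  -- Step 1: change of variables u = s t
  have key : ∀ s : ℝ, 0 < s →
      (s : ℂ) * ∫ t in Set.Ioi (0 : ℝ), ν t * Complex.exp (-(s : ℂ) * t)
      = ∫ u in Set.Ioi (0 : ℝ), ν (u / s) * Complex.exp (-(u : ℂ)) := by
    intro s hs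
    have h := integral_comp_mul_left_Ioi
      (fun u : ℝ => ν (u / s) * Complex.exp (-(u : ℂ))) 0 hs
    rw [mul_zero] at h
    have h2 : (∫ x in Set.Ioi (0:ℝ), ν (s * x / s) * Complex.exp (-((s * x : ℝ) : ℂ)))
        = s⁻¹ • ∫ u in Set.Ioi (0:ℝ), ν (u / s) * Complex.exp (-(u : ℂ)) := h
    have h3 : (∫ x in Set.Ioi (0:ℝ), ν (s * x / s) * Complex.exp (-((s * x : ℝ) : ℂ)))
        = ∫ t in Set.Ioi (0:ℝ), ν t * Complex.exp (-(s : ℂ) * t) := by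
      refine setIntegral_congr_fun measurableSet_Ioi fun x _ => ?_
      rw [mul_div_cancel_left₀ _ hs.ne']
      push_cast
      ring_nf
    rw [h3] at h2
    rw [h2, Complex.real_smul, ← mul_assoc, Complex.ofReal_inv,
      mul_inv_cancel₀ (by exact_mod_cast hs.ne'), one_mul]
  -- Step 2: dominated convergence
  have hlim2 : Tendsto (fun s : ℝ => ∫ u in Set.Ioi (0 : ℝ), ν (u / s) * Complex.exp (-(u : ℂ)))
      (nhdsWithin 0 (Set.Ioi 0)) (nhds (∫ u in Set.Ioi (0 : ℝ), L * Complex.exp (-(u : ℂ)))) := by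
    apply tendsto_integral_filter_of_dominated_convergence (fun u => C * Real.exp (-u))
    · filter_upwards [self_mem_nhdsWithin] with s hs
      exact ((hmeas.comp (measurable_id.div_const s)).mul
        ((Complex.measurable_exp.comp (measurable_id.neg)).comp Complex.measurable_ofReal)).aestronglyMeasurable
    · filter_upwards [self_mem_nhdsWithin] with s hs
      filter_upwards [ae_restrict_mem measurableSet_Ioi] with u hu
      rw [norm_mul]
      have he : ‖Complex.exp (-(u : ℂ))‖ = Real.exp (-u) := by
        rw [show -(u:ℂ) = ((-u : ℝ) : ℂ) by push_cast; ring,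
          Complex.norm_exp, Complex.ofReal_re]
      rw [he]
      exact mul_le_mul_of_nonneg_right (hC _ (div_pos hu hs)) (Real.exp_pos _).le
    · have := (exp_neg_integrableOn_Ioi 0 one_pos).const_mul C
      simpa using this
    · filter_upwards [ae_restrict_mem measurableSet_Ioi] with u hu
      have : Tendsto (fun s : ℝ => u / s) (nhdsWithin 0 (Set.Ioi 0)) atTop := by
        simpa [div_eq_mul_inv] using tendsto_inv_nhdsGT_zero.const_mul_atTop hu
      exact (hlim.comp this).mul_const _
  -- Step 3: compute the limit integral
  have hval : (∫ u in Set.Ioi (0 : ℝ), L * Complex.exp (-(u : ℂ))) = L := by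
    rw [integral_const_mul]
    have h4 : ∀ u : ℝ, Complex.exp (-(u : ℂ)) = ((Real.exp (-u) : ℝ) : ℂ) := fun u => by
      rw [Complex.ofReal_exp, Complex.ofReal_neg]
    simp_rw [h4]
    have h5 : (∫ a in Set.Ioi (0:ℝ), ((Real.exp (-a) : ℝ) : ℂ)) = 1 := by
      rw [← Complex.ofReal_one, ← integral_exp_neg_Ioi_zero]
      exact integral_ofReal
    rw [h5, mul_one]
  rw [hval] at hlim2
  refine hlim2.congr' ?_
  filter_upwards [self_mem_nhdsWithin] with s hs
  exact (key s hs).symm
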